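/- arXiv:2002.06858 — 2 statements merged into one kernel-verified Lean document; each statement's English description precedes it below -/
import Mathlib

section
/- Fix α ∈ (0,1], β = √(1−α²) and c > 0. Let m, n, b : ℝ → ℝ be differentiable functions satisfying the scalar Serret–Frenet system m'(x) = c e^{αx²/4} n(x), n'(x) = −c e^{αx²/4} m(x) − (βx/2) b(x), b'(x) = (βx/2) n(x) on ℝ, with m(0)² + n(0)² + b(0)² = 1, and set w := m + i n : ℝ → ℂ and Φ_α(x) = ∫₀ˣ e^{αs²/4} ds. Then the improper integral W := w(0) + (β/(2c)) ∫₀^∞ e^{i c Φ_α(s) − αs²/4} ( (βs²/2) n(s) + (1 − αs²/2) b(s) ) ds is well defined, the limit lim_{x→∞} e^{i c Φ_α(x)} w(x) exists and equals W, and for all x ≥ 1, |w(x) − e^{−i c Φ_α(x)} W| ≤ (10β/(c α²)) x e^{−αx²/4}. -/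
noncomputable section

open Real MeasureTheory Filter

lemma aux_xexp_tendsto (a : ℝ) (ha : 0 < a) :
    Tendsto (fun x : ℝ => x * Real.exp (-a * x ^ 2 / 4)) atTop (nhds 0) := by
  have h1 : Tendsto (fun x : ℝ => a / 4 * x) atTop atTop :=
    Tendsto.const_mul_atTop (by positivity) tendsto_id
  have h2 := (tendsto_pow_mul_exp_neg_atTop_nhds_zero 1).comp h1
  have h3 : Tendsto (fun x : ℝ => 4 / a * ((a / 4 * x) ^ 1 * Real.exp (-(a / 4 * x)))) atTop
      (nhds 0) := by
    simpa using h2.const_mul (4 / a)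
  apply squeeze_zero_norm' _ h3
  filter_upwards [eventually_ge_atTop (1 : ℝ)] with x hx
  have hx0 : 0 ≤ x := le_trans zero_le_one hx
  have hexp : Real.exp (-a * x ^ 2 / 4) ≤ Real.exp (-(a / 4 * x)) := by
    apply Real.exp_le_exp.2
    nlinarith [mul_le_mul_of_nonneg_left (show x ≤ x ^ 2 by nlinarith) ha.le]
  have h4 : 4 / a * ((a / 4 * x) ^ 1 * Real.exp (-(a / 4 * x))) = x * Real.exp (-(a / 4 * x)) := by
    field_simp
  rw [Real.norm_eq_abs, abs_of_nonneg (by positivity), h4]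
  exact mul_le_mul_of_nonneg_left hexp hx0

lemma aux_linexp_tendsto (a p q : ℝ) (ha : 0 < a) :
    Tendsto (fun x : ℝ => (p * x + q) * Real.exp (-a * x ^ 2 / 4)) atTop (nhds 0) := by
  have h3 : Tendsto (fun x : ℝ => (|p| + |q|) * (x * Real.exp (-a * x ^ 2 / 4))) atTop (nhds 0) := by
    simpa using (aux_xexp_tendsto a ha).const_mul (|p| + |q|)
  apply squeeze_zero_norm' _ h3
  filter_upwards [eventually_ge_atTop (1 : ℝ)] with x hx
  have hx0 : (0:ℝ) ≤ x := le_trans zero_le_one hx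
  have h5 : |p * x + q| ≤ (|p| + |q|) * x := by
    calc |p * x + q| ≤ |p * x| + |q| := abs_add_le _ _
    _ = |p| * x + |q| := by rw [abs_mul, abs_of_nonneg hx0]
    _ ≤ |p| * x + |q| * x := by nlinarith [abs_nonneg q]
    _ = (|p| + |q|) * x := by ring
  rw [Real.norm_eq_abs, abs_mul, Real.abs_exp]
  calc |p * x + q| * Real.exp (-a * x ^ 2 / 4)
      ≤ (|p| + |q|) * x * Real.exp (-a * x ^ 2 / 4) :=
        mul_le_mul_of_nonneg_right h5 (Real.exp_pos _).le
    _ = (|p| + |q|) * (x * Real.exp (-a * x ^ 2 / 4)) := by ring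

/-- `Φ_α(x) = ∫₀ˣ e^{α s²/4} ds`. -/
def Phi (α x : ℝ) : ℝ := ∫ s in (0 : ℝ)..x, Real.exp (α * s ^ 2 / 4)

set_option maxHeartbeats 1000000 in
theorem stmt16 (α β c : ℝ) (hα : α ∈ Set.Ioc (0 : ℝ) 1) (hβ : β = Real.sqrt (1 - α ^ 2))
    (hc : 0 < c) (m n b : ℝ → ℝ)
    (hmdiff : Differentiable ℝ m) (hndiff : Differentiable ℝ n) (hbdiff : Differentiable ℝ b)
    (hm : ∀ x : ℝ, deriv m x = c * Real.exp (α * x ^ 2 / 4) * n x)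
    (hn : ∀ x : ℝ, deriv n x
      = -(c * Real.exp (α * x ^ 2 / 4)) * m x - (β * x / 2) * b x)
    (hb : ∀ x : ℝ, deriv b x = (β * x / 2) * n x)
    (h0 : m 0 ^ 2 + n 0 ^ 2 + b 0 ^ 2 = 1)
    (w : ℝ → ℂ) (hw : w = fun x => (m x : ℂ) + Complex.I * (n x : ℂ)) :
    -- the improper integral defining `W` is well defined
    IntegrableOn
      (fun s : ℝ =>
        Complex.exp (Complex.I * ((c * Phi α s : ℝ) : ℂ) - ((α * s ^ 2 / 4 : ℝ) : ℂ))
          * (((β * s ^ 2 / 2 * n s : ℝ) : ℂ) + ((1 - α * s ^ 2 / 2) * b s : ℝ)))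
      (Set.Ioi (0 : ℝ)) ∧
    ∃ W : ℂ,
      W = w 0 + (β / (2 * c) : ℝ) *
        ∫ s in Set.Ioi (0 : ℝ),
          Complex.exp (Complex.I * ((c * Phi α s : ℝ) : ℂ) - ((α * s ^ 2 / 4 : ℝ) : ℂ))
            * (((β * s ^ 2 / 2 * n s : ℝ) : ℂ) + ((1 - α * s ^ 2 / 2) * b s : ℝ)) ∧
      Tendsto (fun x : ℝ => Complex.exp (Complex.I * ((c * Phi α x : ℝ) : ℂ)) * w x)
        atTop (nhds W) ∧
      (∀ x : ℝ, 1 ≤ x →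
        ‖w x - Complex.exp (-(Complex.I * ((c * Phi α x : ℝ) : ℂ))) * W‖
          ≤ 10 * β / (c * α ^ 2) * x * Real.exp (-α * x ^ 2 / 4)) := by
  obtain ⟨hα0, hα1⟩ := hα
  have hαne : α ≠ 0 := ne_of_gt hα0
  have hβ0 : 0 ≤ β := hβ ▸ Real.sqrt_nonneg _
  have hβsq : β ^ 2 = 1 - α ^ 2 := by
    rw [hβ]; exact Real.sq_sqrt (by nlinarith)
  have hβ1 : β ≤ 1 := by nlinarith
  -- the scalar integrand g
  set g : ℝ → ℂ := fun s =>
    Complex.exp (Complex.I * ((c * Phi α s : ℝ) : ℂ) - ((α * s ^ 2 / 4 : ℝ) : ℂ))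
      * (((β * s ^ 2 / 2 * n s : ℝ) : ℂ) + ((1 - α * s ^ 2 / 2) * b s : ℝ)) with hgdef
  -- derivative of Phi
  have hEc : Continuous fun x : ℝ => Real.exp (α * x ^ 2 / 4) := by continuity
  have HΦ : ∀ x : ℝ, HasDerivAt (Phi α) (Real.exp (α * x ^ 2 / 4)) x := by
    intro x
    exact (hEc.integral_hasStrictDerivAt 0 x).hasDerivAt
  have hΦcont : Continuous (Phi α) :=
    continuous_iff_continuousAt.2 fun x => (HΦ x).continuousAt
  have hΦ0 : Phi α 0 = 0 := intervalIntegral.integral_same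
  -- conservation law
  have key : ∀ x : ℝ, m x ^ 2 + n x ^ 2 + b x ^ 2 = 1 := by
    have hdiffq : Differentiable ℝ fun y => m y ^ 2 + n y ^ 2 + b y ^ 2 :=
      ((hmdiff.pow 2).add (hndiff.pow 2)).add (hbdiff.pow 2)
    have hd : ∀ x : ℝ, deriv (fun y => m y ^ 2 + n y ^ 2 + b y ^ 2) x = 0 := by
      intro x
      have h1 : HasDerivAt (fun y => m y ^ 2 + n y ^ 2 + b y ^ 2)
          ((2 * m x ^ 1 * deriv m x + 2 * n x ^ 1 * deriv n x) + 2 * b x ^ 1 * deriv b x) x :=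
        ((((hmdiff x).hasDerivAt).pow 2).add (((hndiff x).hasDerivAt).pow 2)).add
          (((hbdiff x).hasDerivAt).pow 2)
      rw [h1.deriv, hm x, hn x, hb x]; ring
    intro x
    have := is_const_of_deriv_eq_zero hdiffq hd x 0
    rw [this, h0]
  have habs : ∀ x : ℝ, |m x| ≤ 1 ∧ |n x| ≤ 1 ∧ |b x| ≤ 1 := by
    intro x
    have h := key x
    refine ⟨abs_le.2 ⟨by nlinarith [sq_nonneg (n x), sq_nonneg (b x)],
        by nlinarith [sq_nonneg (n x), sq_nonneg (b x)]⟩,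
      abs_le.2 ⟨by nlinarith [sq_nonneg (m x), sq_nonneg (b x)],
        by nlinarith [sq_nonneg (m x), sq_nonneg (b x)]⟩,
      abs_le.2 ⟨by nlinarith [sq_nonneg (m x), sq_nonneg (n x)],
        by nlinarith [sq_nonneg (m x), sq_nonneg (n x)]⟩⟩
  -- continuity of g
  have hgc : Continuous g := by
    rw [hgdef]
    apply Continuous.mul
    · apply Complex.continuous_exp.comp
      apply Continuous.sub
      · exact continuous_const.mul (Complex.continuous_ofReal.comp (continuous_const.mul hΦcont))
      · exact Complex.continuous_ofReal.comp (by fun_prop)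
    · apply Continuous.add
      · exact Complex.continuous_ofReal.comp (by have := hndiff.continuous; fun_prop)
      · exact Complex.continuous_ofReal.comp (by have := hbdiff.continuous; fun_prop)
  -- norm bound on g
  have hgnorm : ∀ s : ℝ, ‖g s‖ ≤ (1 + s ^ 2) * Real.exp (-α * s ^ 2 / 4) := by
    intro s
    rw [hgdef]
    simp only [norm_mul, Complex.norm_exp]
    have hre : (Complex.I * ((c * Phi α s : ℝ) : ℂ) - ((α * s ^ 2 / 4 : ℝ) : ℂ)).re
        = -α * s ^ 2 / 4 := by
      simp [Complex.sub_re, Complex.mul_re, ← Complex.ofReal_pow]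
      ring
    rw [hre]
    have hA : ‖((β * s ^ 2 / 2 * n s : ℝ) : ℂ) + (((1 - α * s ^ 2 / 2) * b s : ℝ) : ℂ)‖
        ≤ 1 + s ^ 2 := by
      obtain ⟨_, hns, hbs⟩ := habs s
      refine (norm_add_le _ _).trans ?_
      rw [Complex.norm_real, Complex.norm_real, Real.norm_eq_abs, Real.norm_eq_abs]
      have h1 : |β * s ^ 2 / 2 * n s| ≤ s ^ 2 / 2 := by
        rw [abs_mul]
        have e1 : |β * s ^ 2 / 2| ≤ s ^ 2 / 2 := by
          rw [abs_of_nonneg (by positivity)]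
          nlinarith [sq_nonneg s]
        exact ((mul_le_mul e1 hns (abs_nonneg _) (by positivity)).trans_eq (mul_one _))
      have h2 : |(1 - α * s ^ 2 / 2) * b s| ≤ 1 + s ^ 2 / 2 := by
        rw [abs_mul]
        have e1 : |1 - α * s ^ 2 / 2| ≤ 1 + s ^ 2 / 2 := by
          refine abs_le.2 ⟨?_, ?_⟩
          · nlinarith [sq_nonneg s, mul_nonneg (sub_nonneg.2 hα1) (sq_nonneg s)]
          · nlinarith [sq_nonneg s, mul_nonneg hα0.le (sq_nonneg s)]
        exact ((mul_le_mul e1 hbs (abs_nonneg _) (by positivity)).trans_eq (mul_one _))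
      linarith
    calc Real.exp (-α * s ^ 2 / 4) *
          ‖((β * s ^ 2 / 2 * n s : ℝ) : ℂ) + (((1 - α * s ^ 2 / 2) * b s : ℝ) : ℂ)‖
        ≤ Real.exp (-α * s ^ 2 / 4) * (1 + s ^ 2) :=
          mul_le_mul_of_nonneg_left hA (Real.exp_pos _).le
      _ = (1 + s ^ 2) * Real.exp (-α * s ^ 2 / 4) := mul_comm _ _
  -- integrability of the bound and of g
  have hbound_int : IntegrableOn (fun s : ℝ => (1 + s ^ 2) * Real.exp (-α * s ^ 2 / 4))
      (Set.Ioi (0 : ℝ)) := by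
    have h14 : (0:ℝ) < α / 4 := by positivity
    have I1 : Integrable fun s : ℝ => Real.exp (-(α / 4) * s ^ 2) := integrable_exp_neg_mul_sq h14
    have I2 : Integrable fun s : ℝ => s ^ 2 * Real.exp (-(α / 4) * s ^ 2) := by
      have := integrable_rpow_mul_exp_neg_mul_sq h14 (show (-1:ℝ) < 2 by norm_num)
      apply this.congr
      filter_upwards with s
      rw [show ((2:ℝ)) = ((2:ℕ):ℝ) by norm_num, Real.rpow_natCast]
    have : Integrable fun s : ℝ => (1 + s ^ 2) * Real.exp (-α * s ^ 2 / 4) := by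
      have := I1.add I2
      apply this.congr
      filter_upwards with s
      simp only [Pi.add_apply]
      have he : -(α / 4) * s ^ 2 = -α * s ^ 2 / 4 := by ring
      rw [he]; ring
    exact this.integrableOn
  have hgint : IntegrableOn g (Set.Ioi (0 : ℝ)) :=
    hbound_int.mono' hgc.aestronglyMeasurable.restrict (Filter.Eventually.of_forall hgnorm)
  refine ⟨hgint, ?_⟩
  -- the function u and the boundary term B
  set u : ℝ → ℂ := fun x => Complex.exp (Complex.I * ((c * Phi α x : ℝ) : ℂ)) * w x with hudef
  set G : ℝ → ℝ := fun x => Real.exp (-α * x ^ 2 / 4) * (β * x / 2) * b x with hGdef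
  set B : ℝ → ℂ := fun x =>
    -(1 / (c:ℂ)) * (Complex.exp (Complex.I * ((c * Phi α x : ℝ) : ℂ)) * ((G x : ℝ) : ℂ)) with hBdef
  -- derivative of the exponential factor
  have hcΦ : ∀ x : ℝ, HasDerivAt (fun y : ℝ => Complex.I * ((c * Phi α y : ℝ) : ℂ))
      (Complex.I * ((c * Real.exp (α * x ^ 2 / 4) : ℝ) : ℂ)) x := by
    intro x
    have h1 : HasDerivAt (fun y : ℝ => c * Phi α y) (c * Real.exp (α * x ^ 2 / 4)) x :=
      (HΦ x).const_mul c
    exact h1.ofReal_comp.const_mul Complex.I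
  have hexpD : ∀ x : ℝ, HasDerivAt (fun y : ℝ => Complex.exp (Complex.I * ((c * Phi α y : ℝ) : ℂ)))
      (Complex.exp (Complex.I * ((c * Phi α x : ℝ) : ℂ))
        * (Complex.I * ((c * Real.exp (α * x ^ 2 / 4) : ℝ) : ℂ))) x := by
    intro x
    exact (hcΦ x).cexp
  -- derivative of w
  have hwD : ∀ x : ℝ, HasDerivAt w
      (-(Complex.I * ((c * Real.exp (α * x ^ 2 / 4) : ℝ) : ℂ)) * w x
        - Complex.I * ((β * x / 2 * b x : ℝ) : ℂ)) x := by
    intro x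
    rw [hw]
    have h1 : HasDerivAt (fun y : ℝ => ((m y : ℝ) : ℂ)) ((deriv m x : ℝ) : ℂ) x :=
      ((hmdiff x).hasDerivAt).ofReal_comp
    have h2 : HasDerivAt (fun y : ℝ => Complex.I * ((n y : ℝ) : ℂ))
        (Complex.I * ((deriv n x : ℝ) : ℂ)) x :=
      (((hndiff x).hasDerivAt).ofReal_comp).const_mul Complex.I
    have h3 := h1.add h2
    refine h3.congr_deriv ?_
    rw [hm x, hn x]
    have hI : Complex.I * Complex.I = -1 := Complex.I_mul_I
    push_cast
    linear_combination ((c : ℂ) * Complex.exp ((α : ℂ) * (x : ℂ) ^ 2 / 4) * ((n x : ℝ) : ℂ)) * hI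
  -- derivative of u
  have huD : ∀ x : ℝ, HasDerivAt u
      (Complex.exp (Complex.I * ((c * Phi α x : ℝ) : ℂ))
        * (-(Complex.I) * ((β * x / 2 * b x : ℝ) : ℂ))) x := by
    intro x
    have h := (hexpD x).mul (hwD x)
    rw [hudef]
    refine h.congr_deriv ?_
    ring
  -- derivative of G
  have hGD : ∀ x : ℝ, HasDerivAt G
      (Real.exp (-α * x ^ 2 / 4) * (β / 2)
        * (β * x ^ 2 / 2 * n x + (1 - α * x ^ 2 / 2) * b x)) x := by
    intro x
    have h1 : HasDerivAt (fun y : ℝ => Real.exp (-α * y ^ 2 / 4))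
        (Real.exp (-α * x ^ 2 / 4) * (-α * x / 2)) x := by
      have h0 : HasDerivAt (fun y : ℝ => -α * y ^ 2 / 4) (-α * x / 2) x := by
        have := ((hasDerivAt_pow 2 x).const_mul (-α)).div_const 4
        refine this.congr_deriv ?_
        ring
      exact h0.exp
    have h2 : HasDerivAt (fun y : ℝ => β * y / 2) (β / 2) x := by
      have := ((hasDerivAt_id x).const_mul β).div_const 2
      simpa using this
    have h3 := (hbdiff x).hasDerivAt
    have h := (h1.mul h2).mul h3
    rw [hGdef]
    refine h.congr_deriv ?_
    rw [hb x]
    simp only [Pi.mul_apply]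
    ring
  -- derivative of u - B
  have hUB : ∀ x : ℝ, HasDerivAt (fun y => u y - B y) (((β / (2 * c) : ℝ) : ℂ) * g x) x := by
    intro x
    have hB' : HasDerivAt B
        (-(1 / (c:ℂ)) * (Complex.exp (Complex.I * ((c * Phi α x : ℝ) : ℂ))
            * (Complex.I * ((c * Real.exp (α * x ^ 2 / 4) : ℝ) : ℂ)) * ((G x : ℝ) : ℂ)
          + Complex.exp (Complex.I * ((c * Phi α x : ℝ) : ℂ))
            * ((Real.exp (-α * x ^ 2 / 4) * (β / 2)
                * (β * x ^ 2 / 2 * n x + (1 - α * x ^ 2 / 2) * b x) : ℝ) : ℂ))) x := by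
      rw [hBdef]
      exact ((hexpD x).mul ((hGD x).ofReal_comp)).const_mul (-(1 / (c:ℂ)))
    have h := (huD x).sub hB'
    refine h.congr_deriv ?_
    simp only [hgdef, hGdef]
    have hcne : (c:ℂ) ≠ 0 := by exact_mod_cast ne_of_gt hc
    have hexpsub : Complex.exp (Complex.I * ((c * Phi α x : ℝ) : ℂ) - ((α * x ^ 2 / 4 : ℝ) : ℂ))
        = Complex.exp (Complex.I * ((c * Phi α x : ℝ) : ℂ)) * ((Real.exp (-α * x ^ 2 / 4) : ℝ) : ℂ) := by
      rw [Complex.exp_sub, div_eq_mul_inv]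
      congr 1
      rw [← Complex.ofReal_exp, ← Complex.ofReal_inv, ← Real.exp_neg]
      congr 1
      ring
    rw [hexpsub]
    have hEE : ((Real.exp (-α * x ^ 2 / 4) : ℝ) : ℂ) * ((Real.exp (α * x ^ 2 / 4) : ℝ) : ℂ) = 1 := by
      rw [← Complex.ofReal_mul, ← Real.exp_add,
        show -α * x ^ 2 / 4 + α * x ^ 2 / 4 = 0 by ring]
      norm_num
    push_cast
    have hEEc : Complex.exp (-(α:ℂ) * (x:ℂ) ^ 2 / 4) * Complex.exp ((α:ℂ) * (x:ℂ) ^ 2 / 4)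
        = 1 := by
      rw [← Complex.exp_add, show -(α:ℂ) * (x:ℂ) ^ 2 / 4 + (α:ℂ) * (x:ℂ) ^ 2 / 4 = 0 by ring,
        Complex.exp_zero]
    have hcc : (c:ℂ) * (c:ℂ)⁻¹ = 1 := mul_inv_cancel₀ hcne
    linear_combination (-(Complex.exp (Complex.I * ((c:ℂ) * ((Phi α x : ℝ):ℂ))) * Complex.I *
      ((β:ℂ) * (x:ℂ) / 2 * ((b x : ℝ):ℂ)))) * hEEc
      + (-(1/2) * ((β:ℂ) * Complex.exp (Complex.I * ((c:ℂ) * ((Phi α x : ℝ):ℂ)))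
          * Complex.exp (-(α:ℂ) * (x:ℂ) ^ 2 / 4) * (x:ℂ) * ((b x : ℝ):ℂ) * Complex.I
          * Complex.exp ((α:ℂ) * (x:ℂ) ^ 2 / 4))) * hcc
      + (Complex.exp (Complex.I * ((c:ℂ) * ((Phi α x : ℝ):ℂ))) * Complex.I * (β:ℂ) * (x:ℂ)
          * ((b x : ℝ):ℂ) * Complex.exp ((α:ℂ) * (x:ℂ) ^ 2 / 4)
          * Complex.exp (-(α:ℂ) * (x:ℂ) ^ 2 / 4)) * hcc
      + (Complex.exp (Complex.I * ((c:ℂ) * ((Phi α x : ℝ):ℂ))) * Complex.I * (β:ℂ) * (x:ℂ)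
          * ((b x : ℝ):ℂ)) * hEEc
  -- FTC on [0, x]
  have hgcont' : Continuous fun s : ℝ => ((β / (2 * c) : ℝ) : ℂ) * g s := continuous_const.mul hgc
  have hu0 : u 0 = w 0 := by
    rw [hudef]; simp [hΦ0]
  have hB0 : B 0 = 0 := by
    rw [hBdef, hGdef]; simp
  have hux : ∀ x : ℝ, u x = w 0 + B x + ∫ s in (0:ℝ)..x, ((β / (2 * c) : ℝ) : ℂ) * g s := by
    intro x
    have hftc := intervalIntegral.integral_eq_sub_of_hasDerivAt
      (f := fun y => u y - B y) (f' := fun y => ((β / (2 * c) : ℝ) : ℂ) * g y)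
      (fun t _ => hUB t) (hgcont'.intervalIntegrable 0 x)
    rw [hftc, hu0, hB0]
    ring
  -- norm bound for B
  have hnormexp : ∀ r : ℝ, ‖Complex.exp (Complex.I * (r:ℂ))‖ = 1 := by
    intro r
    rw [Complex.norm_exp, show (Complex.I * (r:ℂ)).re = 0 by simp [Complex.mul_re], Real.exp_zero]
  have hBnorm : ∀ x : ℝ, 0 ≤ x → ‖B x‖ ≤ β / (2 * c) * (x * Real.exp (-α * x ^ 2 / 4)) := by
    intro x hx
    rw [hBdef, hGdef]
    simp only [norm_neg, norm_mul]
    rw [hnormexp (c * Phi α x)]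
    have h1 : ‖1 / (c:ℂ)‖ = 1 / c := by
      rw [norm_div, norm_one, Complex.norm_real, Real.norm_eq_abs, abs_of_pos hc]
    rw [h1, Complex.norm_real, Real.norm_eq_abs]
    obtain ⟨-, -, hbs⟩ := habs x
    have h2 : |Real.exp (-α * x ^ 2 / 4) * (β * x / 2) * b x|
        ≤ Real.exp (-α * x ^ 2 / 4) * (β * x / 2) := by
      rw [abs_mul, abs_of_nonneg (by positivity : (0:ℝ) ≤ Real.exp (-α * x ^ 2 / 4) * (β * x / 2))]
      exact (mul_le_mul_of_nonneg_left hbs (by positivity)).trans_eq (mul_one _)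
    calc 1 / c * (1 * |Real.exp (-α * x ^ 2 / 4) * (β * x / 2) * b x|)
        ≤ 1 / c * (1 * (Real.exp (-α * x ^ 2 / 4) * (β * x / 2))) := by
          apply mul_le_mul_of_nonneg_left _ (by positivity)
          simpa using h2
      _ = β / (2 * c) * (x * Real.exp (-α * x ^ 2 / 4)) := by field_simp
  have hBtend : Tendsto B atTop (nhds 0) := by
    have h1 : Tendsto (fun x : ℝ => β / (2 * c) * (x * Real.exp (-α * x ^ 2 / 4))) atTop
        (nhds 0) := by
      simpa using (aux_xexp_tendsto α hα0).const_mul (β / (2 * c))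
    apply squeeze_zero_norm' _ h1
    filter_upwards [eventually_ge_atTop (0:ℝ)] with x hx
    exact hBnorm x hx
  have hItendsto : Tendsto (fun x : ℝ => ∫ s in (0:ℝ)..x, ((β / (2 * c) : ℝ) : ℂ) * g s) atTop
      (nhds (∫ s in Set.Ioi (0:ℝ), ((β / (2 * c) : ℝ) : ℂ) * g s)) :=
    intervalIntegral_tendsto_integral_Ioi 0 (hgint.const_mul _) tendsto_id
  set W : ℂ := w 0 + ((β / (2 * c) : ℝ) : ℂ) * ∫ s in Set.Ioi (0:ℝ), g s with hWdef
  have hWint : (∫ s in Set.Ioi (0:ℝ), ((β / (2 * c) : ℝ) : ℂ) * g s)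
      = ((β / (2 * c) : ℝ) : ℂ) * ∫ s in Set.Ioi (0:ℝ), g s := integral_const_mul _ _
  have hutend : Tendsto u atTop (nhds W) := by
    have h2 : Tendsto (fun x : ℝ => w 0 + B x + ∫ s in (0:ℝ)..x, ((β / (2 * c) : ℝ) : ℂ) * g s)
        atTop (nhds (w 0 + 0 + ∫ s in Set.Ioi (0:ℝ), ((β / (2 * c) : ℝ) : ℂ) * g s)) :=
      ((tendsto_const_nhds).add hBtend).add hItendsto
    rw [add_zero, hWint, ← hWdef] at h2
    exact h2.congr fun x => (hux x).symm
  refine ⟨W, hWdef, hutend, ?_⟩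
  -- the tail estimate
  intro x hx
  have hx0 : (0:ℝ) ≤ x := by linarith
  have hsub1 : IntegrableOn g (Set.Ioc 0 x) := hgint.mono_set Set.Ioc_subset_Ioi_self
  have hsub2 : IntegrableOn g (Set.Ioi x) := hgint.mono_set (Set.Ioi_subset_Ioi hx0)
  have hsplit : (∫ s in Set.Ioi (0:ℝ), g s)
      = (∫ s in Set.Ioc 0 x, g s) + ∫ s in Set.Ioi x, g s := by
    rw [← Set.Ioc_union_Ioi_eq_Ioi hx0]
    exact setIntegral_union (Set.Ioc_disjoint_Ioi le_rfl) measurableSet_Ioi hsub1 hsub2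
  have hiv : (∫ s in (0:ℝ)..x, ((β / (2 * c) : ℝ) : ℂ) * g s)
      = ((β / (2 * c) : ℝ) : ℂ) * ∫ s in Set.Ioc 0 x, g s := by
    rw [intervalIntegral.integral_of_le hx0, integral_const_mul]
  have hdiff : u x - W = B x - ((β / (2 * c) : ℝ) : ℂ) * ∫ s in Set.Ioi x, g s := by
    rw [hux x, hWdef, hiv, hsplit]
    ring
  have habs1 : ‖w x - Complex.exp (-(Complex.I * ((c * Phi α x : ℝ) : ℂ))) * W‖
      = ‖u x - W‖ := by
    have hrw : w x - Complex.exp (-(Complex.I * ((c * Phi α x : ℝ) : ℂ))) * W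
        = Complex.exp (-(Complex.I * ((c * Phi α x : ℝ) : ℂ))) * (u x - W) := by
      rw [hudef, mul_sub, ← mul_assoc, ← Complex.exp_add, neg_add_cancel, Complex.exp_zero,
        one_mul]
    rw [hrw, norm_mul]
    rw [show -(Complex.I * ((c * Phi α x : ℝ) : ℂ)) = Complex.I * ((-(c * Phi α x) : ℝ) : ℂ) by
      push_cast; ring]
    rw [hnormexp, one_mul]
  rw [habs1, hdiff]
  -- bound the tail integral using an explicit antiderivative
  have hEderiv : ∀ s : ℝ, HasDerivAt (fun y : ℝ => Real.exp (-α * y ^ 2 / 4))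
      (Real.exp (-α * s ^ 2 / 4) * (-α * s / 2)) s := by
    intro s
    have h0 : HasDerivAt (fun y : ℝ => -α * y ^ 2 / 4) (-α * s / 2) s := by
      have := ((hasDerivAt_pow 2 s).const_mul (-α)).div_const 4
      refine this.congr_deriv ?_
      ring
    exact h0.exp
  set g2 : ℝ → ℝ := fun s => (s ^ 2 + (1 + 2/α) * s - 2/α) * Real.exp (-α * s ^ 2 / 4) with hg2
  set A2 : ℝ → ℝ := fun s => (-(2/α) * s + -((2/α) * (1 + 2/α))) * Real.exp (-α * s ^ 2 / 4)
    with hA2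
  have hA2D : ∀ s : ℝ, HasDerivAt A2 (g2 s) s := by
    intro s
    have h1 : HasDerivAt (fun y : ℝ => -(2/α) * y + -((2/α) * (1 + 2/α))) (-(2/α)) s := by
      simpa using (((hasDerivAt_id s).const_mul (-(2/α))).add_const (-((2/α) * (1 + 2/α))))
    have := h1.mul (hEderiv s)
    rw [hA2]
    refine this.congr_deriv ?_
    rw [hg2]
    field_simp
    ring
  have hA2tend : Tendsto A2 atTop (nhds 0) := aux_linexp_tendsto α _ _ hα0
  have hg2pos : ∀ s ∈ Set.Ioi x, 0 ≤ g2 s := by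
    intro s hs
    have hs1 : (1:ℝ) ≤ s := le_trans hx (le_of_lt hs)
    have h2a : (0:ℝ) < 2/α := by positivity
    rw [hg2]
    apply mul_nonneg _ (Real.exp_pos _).le
    nlinarith
  have hval : (∫ s in Set.Ioi x, g2 s) = 0 - A2 x :=
    integral_Ioi_of_hasDerivAt_of_nonneg' (fun s _ => hA2D s) hg2pos hA2tend
  have hg2int : IntegrableOn g2 (Set.Ioi x) :=
    integrableOn_Ioi_deriv_of_nonneg' (fun s _ => hA2D s) hg2pos hA2tend
  have hmono : (∫ s in Set.Ioi x, ‖g s‖) ≤ ∫ s in Set.Ioi x, g2 s := by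
    apply setIntegral_mono_on hsub2.norm hg2int measurableSet_Ioi
    intro s hs
    have hs1 : (1:ℝ) ≤ s := le_trans hx (le_of_lt hs)
    refine (hgnorm s).trans ?_
    rw [hg2]
    apply mul_le_mul_of_nonneg_right _ (Real.exp_pos _).le
    have h2a : (0:ℝ) < 2/α := by positivity
    nlinarith
  have htail : ‖∫ s in Set.Ioi x, g s‖
      ≤ ((2/α) * x + (2/α) * (1 + 2/α)) * Real.exp (-α * x ^ 2 / 4) := by
    refine (norm_integral_le_integral_norm g).trans ?_
    calc (∫ s in Set.Ioi x, ‖g s‖) ≤ ∫ s in Set.Ioi x, g2 s := hmono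
      _ = 0 - A2 x := hval
      _ = ((2/α) * x + (2/α) * (1 + 2/α)) * Real.exp (-α * x ^ 2 / 4) := by
          rw [hA2]; ring
  -- assemble the final estimate
  have e1 : ‖B x - ((β / (2 * c) : ℝ) : ℂ) * ∫ s in Set.Ioi x, g s‖
      ≤ β / (2 * c) * (x * Real.exp (-α * x ^ 2 / 4))
        + β / (2 * c) * (((2/α) * x + (2/α) * (1 + 2/α)) * Real.exp (-α * x ^ 2 / 4)) := by
    refine (norm_sub_le _ _).trans (add_le_add (hBnorm x hx0) ?_)
    rw [norm_mul, Complex.norm_real, Real.norm_eq_abs, abs_of_nonneg (by positivity)]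
    exact mul_le_mul_of_nonneg_left htail (by positivity)
  refine e1.trans ?_
  have hcoef : β / (2 * c) * x + β / (2 * c) * ((2/α) * x + (2/α) * (1 + 2/α))
      ≤ 10 * β / (c * α ^ 2) * x := by
    have expand : 10 * β / (c * α ^ 2) * x
        - (β / (2 * c) * x + β / (2 * c) * ((2/α) * x + (2/α) * (1 + 2/α)))
        = β * (20 * x - (x * α ^ 2 + 2 * x * α + 2 * α + 4)) / (2 * c * α ^ 2) := by
      field_simp
      ring
    have hnum : 0 ≤ 20 * x - (x * α ^ 2 + 2 * x * α + 2 * α + 4) := by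
      nlinarith [mul_le_mul_of_nonneg_left hα1 hx0,
        mul_le_mul_of_nonneg_left (show α ^ 2 ≤ 1 by nlinarith) hx0]
    have hpos : 0 ≤ β * (20 * x - (x * α ^ 2 + 2 * x * α + 2 * α + 4)) / (2 * c * α ^ 2) := by
      positivity
    linarith [expand ▸ hpos]
  calc β / (2 * c) * (x * Real.exp (-α * x ^ 2 / 4))
      + β / (2 * c) * (((2/α) * x + (2/α) * (1 + 2/α)) * Real.exp (-α * x ^ 2 / 4))
      = (β / (2 * c) * x + β / (2 * c) * ((2/α) * x + (2/α) * (1 + 2/α)))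
        * Real.exp (-α * x ^ 2 / 4) := by ring
    _ ≤ 10 * β / (c * α ^ 2) * x * Real.exp (-α * x ^ 2 / 4) :=
        mul_le_mul_of_nonneg_right hcoef (Real.exp_pos _).le
end
end

section
/- Let α > 0, σ ∈ ℝ \ {0}, γ ∈ ℝ, and set γ̃ = γ + α/4 and Φ_α(s) = ∫₀^s e^{αt²/4} dt. Assume 0 < γ̃ ≤ 1. Then there exists a universal constant C > 0 (independent of α, σ, γ, x) such that for all x ≥ 1: |∫_x^∞ e^{iσΦ_α(s) − γs²} ds| ≤ C e^{−γ̃x²}/|σ|, |∫_x^∞ s e^{iσΦ_α(s) − γs²} ds| ≤ C x e^{−γ̃x²}/(|σ| γ̃), and |∫_x^∞ s² e^{iσΦ_α(s) − γs²} ds| ≤ C x² e^{−γ̃x²}/(|σ| γ̃); in particular these improper integrals converge. -/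
noncomputable section
open Real MeasureTheory Filter

lemma aux (σ : ℝ) (hσ : σ ≠ 0) {φ φ' : ℝ → ℝ} (hφ : ∀ s, HasDerivAt φ (φ' s) s)
    (hφc : Continuous φ') {g g' : ℝ → ℝ} (hg : ∀ s, HasDerivAt g (g' s) s)
    (hgc : Continuous g') (x B : ℝ)
    (hint : IntegrableOn g' (Set.Ioi x))
    (hB : (∫ s in Set.Ioi x, |g' s|) ≤ B)
    (hg0 : Tendsto g atTop (nhds 0)) :
    ∃ L : ℂ,
      Tendsto (fun y => ∫ s in x..y, ((φ' s * g s : ℝ) : ℂ) *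
          Complex.exp (Complex.I * ((σ * φ s : ℝ) : ℂ))) atTop (nhds L) ∧
      ‖L‖ ≤ (|g x| + B) / |σ| := by
  have hφcont : Continuous φ :=
    continuous_iff_continuousAt.2 fun s => (hφ s).continuousAt
  have hgcont : Continuous g :=
    continuous_iff_continuousAt.2 fun s => (hg s).continuousAt
  set F : ℝ → ℂ := fun s => Complex.exp (Complex.I * ((σ * φ s : ℝ) : ℂ)) with hFdef
  have hFc : Continuous F := by
    apply Complex.continuous_exp.comp
    exact continuous_const.mul (Complex.continuous_ofReal.comp (continuous_const.mul hφcont))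
  have hFnorm : ∀ s, ‖F s‖ = 1 := by
    intro s
    rw [hFdef]
    simp [Complex.norm_exp]
  have hFd : ∀ s, HasDerivAt F (F s * (Complex.I * ((σ * φ' s : ℝ) : ℂ))) s := by
    intro s
    have h1 : HasDerivAt (fun t : ℝ => ((σ * φ t : ℝ) : ℂ)) ((σ * φ' s : ℝ) : ℂ) s := by
      have := ((hφ s).const_mul σ).ofReal_comp
      simpa using this
    exact (h1.const_mul Complex.I).cexp
  set u : ℝ → ℂ := fun s => F s * (g s : ℂ) with hudef
  set d : ℝ → ℂ := fun s =>
    F s * (Complex.I * ((σ * φ' s : ℝ) : ℂ)) * (g s : ℂ) + F s * (g' s : ℂ) with hddef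
  have hud : ∀ s, HasDerivAt u (d s) s := fun s => (hFd s).mul (hg s).ofReal_comp
  have hdc : Continuous d := by
    apply Continuous.add
    · exact ((hFc.mul (continuous_const.mul (Complex.continuous_ofReal.comp
        (continuous_const.mul hφc)))).mul (Complex.continuous_ofReal.comp hgcont))
    · exact hFc.mul (Complex.continuous_ofReal.comp hgc)
  have hIσ : (Complex.I * σ) ≠ 0 := by
    simp [Complex.I_ne_zero, Complex.ofReal_eq_zero, hσ]
  have key : ∀ y, (∫ s in x..y, ((φ' s * g s : ℝ) : ℂ) * F s)
      = (u y - u x - ∫ s in x..y, F s * (g' s : ℂ)) / (Complex.I * σ) := by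
    intro y
    have hftc : (∫ s in x..y, d s) = u y - u x :=
      intervalIntegral.integral_eq_sub_of_hasDerivAt (fun s _ => hud s)
        (hdc.intervalIntegrable _ _)
    have hsplit : (∫ s in x..y, d s)
        = (Complex.I * σ) * (∫ s in x..y, ((φ' s * g s : ℝ) : ℂ) * F s)
          + ∫ s in x..y, F s * (g' s : ℂ) := by
      rw [← intervalIntegral.integral_const_mul, ← intervalIntegral.integral_add]
      · apply intervalIntegral.integral_congr
        intro s _
        show d s = _
        rw [hddef]
        push_cast
        ring
      · apply Continuous.intervalIntegrable
        exact continuous_const.mul ((Complex.continuous_ofReal.comp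
          (hφc.mul hgcont)).mul hFc)
      · exact (hFc.mul (Complex.continuous_ofReal.comp hgc)).intervalIntegrable _ _
    rw [hsplit] at hftc
    rw [eq_div_iff hIσ]
    linear_combination hftc
  have hIntFg : IntegrableOn (fun s => F s * (g' s : ℂ)) (Set.Ioi x) := by
    apply Integrable.mono' hint.norm
      ((hFc.mul (Complex.continuous_ofReal.comp hgc)).aestronglyMeasurable)
    filter_upwards with s
    rw [Pi.mul_apply, Function.comp_apply, norm_mul, hFnorm, one_mul]
    simp
  have h3 : Tendsto (fun y => ∫ s in x..y, F s * (g' s : ℂ)) atTop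
      (nhds (∫ s in Set.Ioi x, F s * (g' s : ℂ))) :=
    intervalIntegral_tendsto_integral_Ioi x hIntFg tendsto_id
  have h4 : Tendsto u atTop (nhds 0) := by
    apply squeeze_zero_norm (a := fun y => |g y|)
    · intro y
      rw [hudef]
      simp only [norm_mul, hFnorm, one_mul, Complex.norm_real, Real.norm_eq_abs]
      exact le_rfl
    · simpa using hg0.abs
  refine ⟨(0 - u x - ∫ s in Set.Ioi x, F s * (g' s : ℂ)) / (Complex.I * σ), ?_, ?_⟩
  · apply Tendsto.congr (fun y => (key y).symm)
    exact (((h4.sub_const (u x)).sub h3).div_const (Complex.I * σ))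
  · rw [norm_div]
    have hden : ‖Complex.I * σ‖ = |σ| := by
      simp
    rw [hden]
    have hσpos : 0 < |σ| := abs_pos.mpr hσ
    have e1 : ‖u x‖ = |g x| := by
      rw [hudef]
      show ‖F x * (g x : ℂ)‖ = |g x|
      rw [norm_mul, hFnorm, one_mul, Complex.norm_real, Real.norm_eq_abs]
    have e2 : ‖∫ s in Set.Ioi x, F s * (g' s : ℂ)‖ ≤ B := by
      refine (norm_integral_le_integral_norm _).trans ?_
      refine le_trans (le_of_eq ?_) hB
      apply integral_congr_ae
      filter_upwards with s
      rw [norm_mul, hFnorm, one_mul, Complex.norm_real,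
        Real.norm_eq_abs]
    have h5 : ‖0 - u x - ∫ s in Set.Ioi x, F s * (g' s : ℂ)‖ ≤ |g x| + B := by
      rw [zero_sub]
      refine (norm_sub_le _ _).trans ?_
      rw [norm_neg, e1]
      exact add_le_add le_rfl e2
    gcongr


lemma tail_bound {x : ℝ} {q k' k : ℝ → ℝ}
    (hk : ∀ s, HasDerivAt k (k' s) s) (hk0 : Tendsto k atTop (nhds 0))
    (hik : IntegrableOn k' (Set.Ioi x))
    (hiq : IntegrableOn (fun s => |q s|) (Set.Ioi x))
    (hle : ∀ s ∈ Set.Ioi x, |q s| ≤ k' s) :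
    (∫ s in Set.Ioi x, |q s|) ≤ -k x := by
  have h1 : (∫ s in Set.Ioi x, k' s) = 0 - k x :=
    integral_Ioi_of_hasDerivAt_of_tendsto
      ((hk x).continuousAt.continuousWithinAt) (fun s _ => hk s) hik hk0
  rw [zero_sub] at h1
  rw [← h1]
  exact setIntegral_mono_on hiq hik measurableSet_Ioi hle

lemma phi_deriv (α : ℝ) (x : ℝ) :
    HasDerivAt (Phi α) (Real.exp (α * x ^ 2 / 4)) x := by
  have hc : Continuous fun s : ℝ => Real.exp (α * s ^ 2 / 4) := by continuity
  exact intervalIntegral.integral_hasDerivAt_right (hc.intervalIntegrable _ _)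
    hc.aestronglyMeasurable.stronglyMeasurableAtFilter hc.continuousAt

lemma integrand_eq (α σ γ : ℝ) (j : ℕ) (s : ℝ) :
    (s : ℂ) ^ j * Complex.exp (Complex.I * ((σ * Phi α s : ℝ) : ℂ) - ((γ * s ^ 2 : ℝ) : ℂ))
    = ((Real.exp (α * s ^ 2 / 4) * (s ^ j * Real.exp (-(γ + α / 4) * s ^ 2)) : ℝ) : ℂ)
      * Complex.exp (Complex.I * ((σ * Phi α s : ℝ) : ℂ)) := by
  have hre : Real.exp (α * s ^ 2 / 4) * (s ^ j * Real.exp (-(γ + α / 4) * s ^ 2))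
      = s ^ j * Real.exp (-(γ * s ^ 2)) := by
    rw [mul_left_comm, ← Real.exp_add]
    congr 2
    ring
  rw [hre, Complex.exp_sub]
  push_cast
  rw [Complex.exp_neg]
  field_simp [Complex.exp_ne_zero]

lemma intOn (b : ℝ) (hb : 0 < b) (n : ℕ) {x : ℝ} (hx : 0 ≤ x) :
    IntegrableOn (fun s : ℝ => s ^ n * Real.exp (-b * s ^ 2)) (Set.Ioi x) := by
  have h := integrableOn_rpow_mul_exp_neg_mul_sq hb
    (s := (n : ℝ)) (lt_of_lt_of_le neg_one_lt_zero (Nat.cast_nonneg n))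
  simp_rw [Real.rpow_natCast] at h
  exact h.mono_set (Set.Ioi_subset_Ioi hx)

lemma tend0 (b : ℝ) (hb : 0 < b) (n : ℕ) :
    Tendsto (fun s : ℝ => s ^ n * Real.exp (-b * s ^ 2)) atTop (nhds 0) := by
  apply squeeze_zero_norm' (a := fun s : ℝ => s ^ n * Real.exp (-s))
  · filter_upwards [eventually_ge_atTop (max 0 (1 / b))] with s hs
    have hs0 : (0 : ℝ) ≤ s := le_trans (le_max_left _ _) hs
    have hsb : 1 / b ≤ s := le_trans (le_max_right _ _) hs
    rw [Real.norm_eq_abs, abs_mul, abs_of_nonneg (pow_nonneg hs0 n),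
      abs_of_nonneg (Real.exp_nonneg _)]
    apply mul_le_mul_of_nonneg_left _ (pow_nonneg hs0 n)
    apply Real.exp_le_exp.2
    nlinarith [mul_le_mul_of_nonneg_left ((div_le_iff₀ hb).mp hsb) hs0]
  · exact Real.tendsto_pow_mul_exp_neg_atTop_nhds_zero n

lemma case_main (α σ γ b : ℝ) (hσ : σ ≠ 0) (hb : 0 < b) (hbdef : b = γ + α / 4)
    (x : ℝ) (hx : 0 ≤ x) (j : ℕ) {g' k k' : ℝ → ℝ}
    (hg : ∀ s, HasDerivAt (fun t => t ^ j * Real.exp (-b * t ^ 2)) (g' s) s)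
    (hg'c : Continuous g')
    (hint : IntegrableOn g' (Set.Ioi x))
    (hk : ∀ s, HasDerivAt k (k' s) s) (hk0 : Tendsto k atTop (nhds 0))
    (hik : IntegrableOn k' (Set.Ioi x))
    (hle : ∀ s ∈ Set.Ioi x, |g' s| ≤ k' s) :
    ∃ L : ℂ,
      Tendsto (fun y => ∫ s in x..y, (s : ℂ) ^ j *
        Complex.exp (Complex.I * ((σ * Phi α s : ℝ) : ℂ) - ((γ * s ^ 2 : ℝ) : ℂ)))
        atTop (nhds L) ∧
      ‖L‖ ≤ (x ^ j * Real.exp (-b * x ^ 2) + -k x) / |σ| := by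
  subst hbdef
  have hiq : IntegrableOn (fun s => |g' s|) (Set.Ioi x) := hint.abs
  obtain ⟨L, hL, hLb⟩ := aux σ hσ (φ := Phi α) (φ' := fun s => Real.exp (α * s ^ 2 / 4))
    (phi_deriv α) (by continuity)
    (g := fun t => t ^ j * Real.exp (-(γ + α / 4) * t ^ 2)) hg hg'c x (-k x) hint
    (tail_bound hk hk0 hik hiq hle) (tend0 _ hb j)
  refine ⟨L, ?_, ?_⟩
  · apply Tendsto.congr _ hL
    intro y
    apply intervalIntegral.integral_congr
    intro s _
    exact (integrand_eq α σ γ j s).symm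
  · refine hLb.trans (le_of_eq ?_)
    congr 1
    rw [abs_mul, abs_of_nonneg (pow_nonneg hx j), abs_of_nonneg (Real.exp_nonneg _)]

theorem stmt18 :
    ∃ C : ℝ, 0 < C ∧
      ∀ α : ℝ, 0 < α → ∀ σ : ℝ, σ ≠ 0 → ∀ γ : ℝ,
        0 < γ + α / 4 → γ + α / 4 ≤ 1 → ∀ x : ℝ, 1 ≤ x →
          ∃ L₀ L₁ L₂ : ℂ,
            Tendsto (fun y : ℝ =>
                ∫ s in x..y,
                  Complex.exp (Complex.I * ((σ * Phi α s : ℝ) : ℂ) - ((γ * s ^ 2 : ℝ) : ℂ)))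
              atTop (nhds L₀) ∧
            Tendsto (fun y : ℝ =>
                ∫ s in x..y, (s : ℂ) *
                  Complex.exp (Complex.I * ((σ * Phi α s : ℝ) : ℂ) - ((γ * s ^ 2 : ℝ) : ℂ)))
              atTop (nhds L₁) ∧
            Tendsto (fun y : ℝ =>
                ∫ s in x..y, ((s : ℂ) ^ 2) *
                  Complex.exp (Complex.I * ((σ * Phi α s : ℝ) : ℂ) - ((γ * s ^ 2 : ℝ) : ℂ)))
              atTop (nhds L₂) ∧
            ‖L₀‖ ≤ C * Real.exp (-(γ + α / 4) * x ^ 2) / |σ| ∧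
            ‖L₁‖ ≤ C * x * Real.exp (-(γ + α / 4) * x ^ 2) / (|σ| * (γ + α / 4)) ∧
            ‖L₂‖ ≤ C * x ^ 2 * Real.exp (-(γ + α / 4) * x ^ 2) / (|σ| * (γ + α / 4)) := by
  refine ⟨10, by norm_num, ?_⟩
  intro α hα σ hσ γ hb hb1 x hx
  set b : ℝ := γ + α / 4 with hbdef
  clear_value b
  have hx0 : (0 : ℝ) ≤ x := le_trans zero_le_one hx
  have hσpos : (0 : ℝ) < |σ| := abs_pos.mpr hσ
  have hE : (0 : ℝ) < Real.exp (-b * x ^ 2) := Real.exp_pos _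
  -- basic derivative of the gaussian
  have hexp : ∀ s : ℝ, HasDerivAt (fun t : ℝ => Real.exp (-b * t ^ 2))
      (Real.exp (-b * s ^ 2) * (-b * (2 * s))) s := by
    intro s
    have := ((hasDerivAt_pow 2 s).const_mul (-b)).exp
    simpa using this
  have base : ∀ n : ℕ, IntegrableOn (fun s : ℝ => s ^ n * Real.exp (-b * s ^ 2))
      (Set.Ioi x) := fun n => intOn b hb n hx0
  -- Case j = 0
  have case0 : ∃ L : ℂ,
      Tendsto (fun y => ∫ s in x..y, (s : ℂ) ^ 0 *
        Complex.exp (Complex.I * ((σ * Phi α s : ℝ) : ℂ) - ((γ * s ^ 2 : ℝ) : ℂ)))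
        atTop (nhds L) ∧
      ‖L‖ ≤ (x ^ 0 * Real.exp (-b * x ^ 2) +
        -(-Real.exp (-b * x ^ 2))) / |σ| := by
    apply case_main α σ γ b hσ hb hbdef x hx0 0
      (g' := fun s => (-(2 * b * s)) * Real.exp (-b * s ^ 2))
      (k := fun s => -Real.exp (-b * s ^ 2))
      (k' := fun s => (2 * b * s) * Real.exp (-b * s ^ 2))
    · intro s
      have h := ((hasDerivAt_pow 0 s).fun_mul (hexp s))
      refine h.congr_deriv ?_
      simp
      ring
    · continuity
    · apply Integrable.congr ((base 1).const_mul (-(2 * b)))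
      filter_upwards with s
      ring
    · intro s
      have := (hexp s).fun_neg
      refine this.congr_deriv ?_
      ring
    · have := ((tend0 b hb 0).const_mul (-1 : ℝ))
      simpa using this
    · apply Integrable.congr ((base 1).const_mul (2 * b))
      filter_upwards with s
      ring
    · intro s hs
      have hs1 : (1 : ℝ) ≤ s := le_of_lt (lt_of_le_of_lt hx hs)
      rw [abs_mul, abs_of_nonneg (Real.exp_nonneg _)]
      apply mul_le_mul_of_nonneg_right _ (Real.exp_nonneg _)
      rw [abs_neg, abs_of_nonneg (by nlinarith : (0:ℝ) ≤ 2 * b * s)]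
  -- Case j = 1
  have case1 : ∃ L : ℂ,
      Tendsto (fun y => ∫ s in x..y, (s : ℂ) ^ 1 *
        Complex.exp (Complex.I * ((σ * Phi α s : ℝ) : ℂ) - ((γ * s ^ 2 : ℝ) : ℂ)))
        atTop (nhds L) ∧
      ‖L‖ ≤ (x ^ 1 * Real.exp (-b * x ^ 2) +
        -(-(2 * x + 3 / (2 * b)) * Real.exp (-b * x ^ 2))) / |σ| := by
    apply case_main α σ γ b hσ hb hbdef x hx0 1
      (g' := fun s => (1 - 2 * b * s ^ 2) * Real.exp (-b * s ^ 2))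
      (k := fun s => -(2 * s + 3 / (2 * b)) * Real.exp (-b * s ^ 2))
      (k' := fun s => (4 * b * s ^ 2 + 3 * s - 2) * Real.exp (-b * s ^ 2))
    · intro s
      have h := ((hasDerivAt_pow 1 s).fun_mul (hexp s))
      refine h.congr_deriv ?_
      simp
      ring
    · fun_prop
    · apply Integrable.congr ((base 0).sub ((base 2).const_mul (2 * b)))
      filter_upwards with s
      simp only [Pi.sub_apply, Pi.add_apply]
      ring
    · intro s
      have hlin : HasDerivAt (fun t : ℝ => -(2 * t + 3 / (2 * b))) (-2) s := by
        simpa using (((hasDerivAt_id s).const_mul (2 : ℝ)).add_const (3 / (2 * b))).fun_neg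
      have h := hlin.fun_mul (hexp s)
      refine h.congr_deriv ?_
      field_simp
      ring
    · have h := (((tend0 b hb 1).const_mul (2 : ℝ)).add
        ((tend0 b hb 0).const_mul (3 / (2 * b)))).neg
      have h2 : Tendsto (fun s : ℝ => -(2 * (s ^ 1 * Real.exp (-b * s ^ 2)) +
          3 / (2 * b) * (s ^ 0 * Real.exp (-b * s ^ 2)))) atTop (nhds 0) := by
        simpa using h
      exact Tendsto.congr (fun s => by ring) h2
    · apply Integrable.congr
        ((((base 2).const_mul (4 * b)).add ((base 1).const_mul 3)).sub
          ((base 0).const_mul 2))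
      filter_upwards with s
      simp only [Pi.sub_apply, Pi.add_apply]
      ring
    · intro s hs
      have hs1 : (1 : ℝ) ≤ s := le_of_lt (lt_of_le_of_lt hx hs)
      rw [abs_mul, abs_of_nonneg (Real.exp_nonneg _)]
      apply mul_le_mul_of_nonneg_right _ (Real.exp_nonneg _)
      have hs0 : (0 : ℝ) < s := lt_of_lt_of_le one_pos hs1
      rw [abs_le]
      constructor <;>
        nlinarith [mul_pos hb (pow_pos hs0 3), mul_pos hb (pow_pos hs0 2),
          mul_pos hb hs0]
  -- Case j = 2
  have case2 : ∃ L : ℂ,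
      Tendsto (fun y => ∫ s in x..y, (s : ℂ) ^ 2 *
        Complex.exp (Complex.I * ((σ * Phi α s : ℝ) : ℂ) - ((γ * s ^ 2 : ℝ) : ℂ)))
        atTop (nhds L) ∧
      ‖L‖ ≤ (x ^ 2 * Real.exp (-b * x ^ 2) +
        -(-(x ^ 2 + 2 / b) * Real.exp (-b * x ^ 2))) / |σ| := by
    apply case_main α σ γ b hσ hb hbdef x hx0 2
      (g' := fun s => (2 * s - 2 * b * s ^ 3) * Real.exp (-b * s ^ 2))
      (k := fun s => -(s ^ 2 + 2 / b) * Real.exp (-b * s ^ 2))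
      (k' := fun s => (2 * b * s ^ 3 + 2 * s) * Real.exp (-b * s ^ 2))
    · intro s
      have h := ((hasDerivAt_pow 2 s).fun_mul (hexp s))
      refine h.congr_deriv ?_
      simp
      ring
    · fun_prop
    · apply Integrable.congr (((base 1).const_mul 2).sub ((base 3).const_mul (2 * b)))
      filter_upwards with s
      simp only [Pi.sub_apply, Pi.add_apply]
      ring
    · intro s
      have hlin : HasDerivAt (fun t : ℝ => -(t ^ 2 + 2 / b)) (-(2 * s)) s := by
        simpa using ((hasDerivAt_pow 2 s).add_const (2 / b)).fun_neg
      have h := hlin.fun_mul (hexp s)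
      refine h.congr_deriv ?_
      field_simp
      ring
    · have h := ((tend0 b hb 2).add ((tend0 b hb 0).const_mul (2 / b))).neg
      have h2 : Tendsto (fun s : ℝ => -(s ^ 2 * Real.exp (-b * s ^ 2) +
          2 / b * (s ^ 0 * Real.exp (-b * s ^ 2)))) atTop (nhds 0) := by
        simpa using h
      exact Tendsto.congr (fun s => by ring) h2
    · apply Integrable.congr (((base 3).const_mul (2 * b)).add ((base 1).const_mul 2))
      filter_upwards with s
      simp only [Pi.sub_apply, Pi.add_apply]
      ring
    · intro s hs
      have hs1 : (1 : ℝ) ≤ s := le_of_lt (lt_of_le_of_lt hx hs)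
      rw [abs_mul, abs_of_nonneg (Real.exp_nonneg _)]
      apply mul_le_mul_of_nonneg_right _ (Real.exp_nonneg _)
      have hs0 : (0 : ℝ) < s := lt_of_lt_of_le one_pos hs1
      rw [abs_le]
      constructor <;>
        nlinarith [mul_pos hb (pow_pos hs0 3), mul_pos hb (pow_pos hs0 2),
          mul_pos hb hs0]
  obtain ⟨L₀, hT0, hB0⟩ := case0
  obtain ⟨L₁, hT1, hB1⟩ := case1
  obtain ⟨L₂, hT2, hB2⟩ := case2
  refine ⟨L₀, L₁, L₂, ?_, ?_, hT2, ?_, ?_, ?_⟩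
  · apply Tendsto.congr _ hT0
    intro y
    apply intervalIntegral.integral_congr
    intro s _
    simp only [pow_zero, one_mul]
  · apply Tendsto.congr _ hT1
    intro y
    apply intervalIntegral.integral_congr
    intro s _
    simp only [pow_one]
  · refine hB0.trans ?_
    gcongr
    · nlinarith [Real.exp_nonneg (-b * x ^ 2)]
  · refine hB1.trans ?_
    rw [div_le_div_iff₀ hσpos (by positivity)]
    have hcancel : 3 / (2 * b) * b = 3 / 2 := by field_simp
    have key : (x ^ 1 + (2 * x + 3 / (2 * b))) * b ≤ 10 * x := by
      have h1 := mul_le_mul_of_nonneg_left hb1 (by linarith : (0:ℝ) ≤ 3 * x)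
      have expand : (x ^ 1 + (2 * x + 3 / (2 * b))) * b
          = 3 * x * b + 3 / (2 * b) * b := by ring
      rw [expand, hcancel]
      linarith
    calc (x ^ 1 * Real.exp (-b * x ^ 2) +
          -(-(2 * x + 3 / (2 * b)) * Real.exp (-b * x ^ 2))) * (|σ| * b)
        = ((x ^ 1 + (2 * x + 3 / (2 * b))) * b) * (Real.exp (-b * x ^ 2) * |σ|) := by ring
      _ ≤ (10 * x) * (Real.exp (-b * x ^ 2) * |σ|) :=
          mul_le_mul_of_nonneg_right key (by positivity)
      _ = 10 * x * Real.exp (-b * x ^ 2) * |σ| := by ring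
  · refine hB2.trans ?_
    rw [div_le_div_iff₀ hσpos (by positivity)]
    have hcancel : 2 / b * b = 2 := by field_simp
    have key : (x ^ 2 + (x ^ 2 + 2 / b)) * b ≤ 10 * x ^ 2 := by
      have h1 := mul_le_mul_of_nonneg_left hb1 (by positivity : (0:ℝ) ≤ 2 * x ^ 2)
      have hx2 : (1:ℝ) ≤ x ^ 2 := by nlinarith
      have expand : (x ^ 2 + (x ^ 2 + 2 / b)) * b
          = 2 * x ^ 2 * b + 2 / b * b := by ring
      rw [expand, hcancel]
      linarith
    calc (x ^ 2 * Real.exp (-b * x ^ 2) +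
          -(-(x ^ 2 + 2 / b) * Real.exp (-b * x ^ 2))) * (|σ| * b)
        = ((x ^ 2 + (x ^ 2 + 2 / b)) * b) * (Real.exp (-b * x ^ 2) * |σ|) := by ring
      _ ≤ (10 * x ^ 2) * (Real.exp (-b * x ^ 2) * |σ|) :=
          mul_le_mul_of_nonneg_right key (by positivity)
      _ = 10 * x ^ 2 * Real.exp (-b * x ^ 2) * |σ| := by ring
end
end
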